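/- Let G be a simple graph such that every subgraph with m vertices has at most c·m edges (c ≥ 1). Then the positive edges of any weighting of G can be covered by O(c²) feasible sets; concretely, E⁺ partitions into at most 2c forests, each forest splits into 2 vertex-disjoint unions of stars, and each union of stars splits into at most 2c feasible sets using a (2c+1)-coloring of G, giving at most 8c² feasible sets in total. -/

import Mathlib

open scoped Classical
open Finset

/-- Number of edges of `G` with both endpoints in `S`. -/
noncomputable def edgesIn {V : Type} [Fintype V] (G : SimpleGraph V)
    (S : Finset V) : ℕ :=
  (Finset.univ.filter (fun e : Sym2 V => e ∈ G.edgeSet ∧ ∀ v ∈ e, v ∈ S)).card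


def skipc (a t : ℕ) : ℕ := if t < a then t else t + 1

lemma skipc_ne (a t : ℕ) : skipc a t ≠ a := by
  unfold skipc; split <;> omega

lemma skipc_surj {n a b : ℕ} (ha : a < n + 1) (hb : b < n + 1) (hab : b ≠ a) :
    ∃ t < n, skipc a t = b := by
  rcases lt_or_gt_of_ne hab with h | h
  · exact ⟨b, by omega, by unfold skipc; split <;> omega⟩
  · exact ⟨b - 1, by omega, by unfold skipc; split <;> omega⟩

noncomputable def depAux {V : Type} (r : V → ℕ) (f : V → Option V)
    (hf : ∀ v u, f v = some u → r u < r v) (v : V) : ℕ :=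
  match h : f v with
  | none => 0
  | some u => depAux r f hf u + 1
termination_by r v
decreasing_by exact hf v u h

lemma depAux_some {V : Type} (r : V → ℕ) (f : V → Option V)
    (hf : ∀ v u, f v = some u → r u < r v) {v u : V} (h : f v = some u) :
    depAux r f hf v = depAux r f hf u + 1 := by
  rw [depAux, h]


lemma handshake {V : Type} [Fintype V] (G : SimpleGraph V) (S : Finset V) :
    ∑ v ∈ S, (S.filter (fun u => G.Adj v u)).card = 2 * edgesIn G S := by
  classical
  have h1 : ∑ v ∈ S, (S.filter (fun u => G.Adj v u)).card
      = ((S ×ˢ S).filter (fun p : V × V => G.Adj p.1 p.2)).card := by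
    simp only [Finset.card_filter, Finset.sum_product]
  rw [h1]
  rw [Finset.card_eq_sum_card_fiberwise
    (f := fun p : V × V => s(p.1, p.2))
    (t := Finset.univ.filter (fun e : Sym2 V => e ∈ G.edgeSet ∧ ∀ v ∈ e, v ∈ S))]
  · rw [edgesIn, Finset.sum_congr rfl, Finset.sum_const, smul_eq_mul, mul_comm]
    intro e he
    simp only [Finset.mem_filter, Finset.mem_univ, true_and] at he
    induction e with
    | h a b =>
      have hab : a ≠ b := by
        intro h; subst h; exact G.irrefl (G.mem_edgeSet.mp he.1)
      have hadj : G.Adj a b := G.mem_edgeSet.mp he.1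
      have haS : a ∈ S := he.2 a (by simp)
      have hbS : b ∈ S := he.2 b (by simp [Sym2.mem_iff])
      have : (((S ×ˢ S).filter (fun p : V × V => G.Adj p.1 p.2)).filter
          (fun p => s(p.1, p.2) = s(a, b))) = {(a, b), (b, a)} := by
        ext p
        simp only [Finset.mem_filter, Finset.mem_product, Finset.mem_insert,
          Finset.mem_singleton, Sym2.eq_iff]
        constructor
        · rintro ⟨⟨_, _⟩, (⟨h1, h2⟩ | ⟨h1, h2⟩)⟩
          · left; exact Prod.ext h1 h2
          · right; exact Prod.ext h1 h2
        · rintro (rfl | rfl)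
          · simp [haS, hbS, hadj, hadj.symm]
          · simp [haS, hbS, hadj, hadj.symm]
      rw [this, Finset.card_insert_of_notMem (by simp [hab, Prod.ext_iff]),
        Finset.card_singleton]
  · intro p hp
    simp only [Finset.mem_coe, Finset.mem_filter, Finset.mem_product] at hp ⊢
    refine ⟨Finset.mem_univ _, ?_, ?_⟩
    · exact G.mem_edgeSet.mpr hp.2
    · intro v hv
      rcases Sym2.mem_iff.mp hv with rfl | rfl
      · exact hp.1.1
      · exact hp.1.2

lemma exists_lowdeg {V : Type} [Fintype V] (G : SimpleGraph V) (c : ℕ)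
    (hsparse : ∀ S : Finset V, edgesIn G S ≤ c * S.card)
    (S : Finset V) (hS : S.Nonempty) :
    ∃ v ∈ S, (S.filter (fun u => G.Adj v u)).card ≤ 2 * c := by
  by_contra h
  push_neg at h
  have hsum : ∑ v ∈ S, (S.filter (fun u => G.Adj v u)).card
      ≥ ∑ v ∈ S, (2 * c + 1) := Finset.sum_le_sum (fun v hv => h v hv)
  rw [Finset.sum_const, smul_eq_mul, handshake] at hsum
  have := hsparse S
  have hcard : 1 ≤ S.card := Finset.card_pos.mpr hS
  nlinarith [hsum, this, hcard]

lemma exists_order {V : Type} [Fintype V] (G : SimpleGraph V) (c : ℕ)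
    (hsparse : ∀ S : Finset V, edgesIn G S ≤ c * S.card) :
    ∃ r : V → ℕ, Function.Injective r ∧
      ∀ v, (Finset.univ.filter (fun u => G.Adj v u ∧ r u < r v)).card ≤ 2 * c := by
  classical
  have key : ∀ n (S : Finset V), S.card = n → ∃ r : V → ℕ,
      Set.InjOn r ↑S ∧ (∀ v ∈ S, r v < n) ∧
      ∀ v ∈ S, (S.filter (fun u => G.Adj v u ∧ r u < r v)).card ≤ 2 * c := by
    intro n
    induction n with
    | zero =>
      intro S hS
      rw [Finset.card_eq_zero] at hS
      subst hS
      exact ⟨fun _ => 0, by simp [Set.InjOn], by simp, by simp⟩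
    | succ n ih =>
      intro S hS
      have hne : S.Nonempty := Finset.card_pos.mp (by omega)
      obtain ⟨v, hv, hdeg⟩ := exists_lowdeg G c hsparse S hne
      obtain ⟨r, hinj, hlt, hbound⟩ := ih (S.erase v)
        (by rw [Finset.card_erase_of_mem hv, hS]; omega)
      refine ⟨fun u => if u = v then n else r u, ?_, ?_, ?_⟩
      · intro a ha b hb hab
        simp only [Finset.mem_coe] at ha hb
        simp only [] at hab
        by_cases hav : a = v
        · by_cases hbv : b = v
          · rw [hav, hbv]
          · rw [if_pos hav, if_neg hbv] at hab
            exact absurd (hlt b (Finset.mem_erase.mpr ⟨hbv, hb⟩)) (by omega)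
        · by_cases hbv : b = v
          · rw [if_neg hav, if_pos hbv] at hab
            exact absurd (hlt a (Finset.mem_erase.mpr ⟨hav, ha⟩)) (by omega)
          · rw [if_neg hav, if_neg hbv] at hab
            exact hinj (Finset.mem_coe.mpr (Finset.mem_erase.mpr ⟨hav, ha⟩))
              (Finset.mem_coe.mpr (Finset.mem_erase.mpr ⟨hbv, hb⟩)) hab
      · intro u hu
        by_cases huv : u = v
        · simp [huv]
        · simp only [if_neg huv]
          exact Nat.lt_succ_of_lt (hlt u (Finset.mem_erase.mpr ⟨huv, hu⟩))
      · intro u hu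
        by_cases huv : u = v
        · subst huv
          refine le_trans (Finset.card_le_card ?_) hdeg
          intro x hx
          simp only [Finset.mem_filter] at hx ⊢
          exact ⟨hx.1, hx.2.1⟩
        · have hme : u ∈ S.erase v := Finset.mem_erase.mpr ⟨huv, hu⟩
          have hru : r u < n := hlt u hme
          have hsub : S.filter (fun x => G.Adj u x ∧ (if x = v then n else r x) < (if u = v then n else r u))
              ⊆ (S.erase v).filter (fun x => G.Adj u x ∧ r x < r u) := by
            intro x hx
            simp only [Finset.mem_filter, if_neg huv] at hx
            have hxv : x ≠ v := by
              rintro rfl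
              rw [if_pos rfl] at hx
              omega
            simp only [if_neg hxv] at hx
            exact Finset.mem_filter.mpr ⟨Finset.mem_erase.mpr ⟨hxv, hx.1⟩, hx.2⟩
          exact le_trans (Finset.card_le_card hsub) (hbound u hme)
  obtain ⟨r, hinj, _, hbound⟩ := key (Finset.univ.card) Finset.univ rfl
  refine ⟨r, fun a b hab => hinj (by simp) (by simp) hab, fun v => ?_⟩
  exact hbound v (Finset.mem_univ v)

lemma exists_coloring {V : Type} [Fintype V] (G : SimpleGraph V) (c : ℕ)
    (r : V → ℕ) (hrinj : Function.Injective r)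
    (hrb : ∀ v, (Finset.univ.filter (fun u => G.Adj v u ∧ r u < r v)).card ≤ 2 * c) :
    ∃ φ : V → ℕ, (∀ v, φ v < 2 * c + 1) ∧ ∀ u v, G.Adj u v → φ u ≠ φ v := by
  classical
  have aux : ∀ n, ∃ φ : V → ℕ, (∀ v, φ v < 2 * c + 1) ∧
      ∀ u v, G.Adj u v → r u < r v → r v < n → φ u ≠ φ v := by
    intro n
    induction n with
    | zero => exact ⟨fun _ => 0, fun _ => by show (0:ℕ) < 2 * c + 1; omega, fun u v _ _ h => absurd h (by omega)⟩
    | succ n ih =>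
      obtain ⟨φ, hφb, hφ⟩ := ih
      by_cases h : ∃ v, r v = n
      · obtain ⟨v, hvn⟩ := h
        set A := ((Finset.univ.filter (fun u => G.Adj v u ∧ r u < r v)).image φ) with hA
        have hAcard : A.card ≤ 2 * c :=
          le_trans (Finset.card_image_le) (hrb v)
        have hB : ((Finset.range (2 * c + 1)) \ A).Nonempty := by
          rw [← Finset.card_pos]
          have := Finset.le_card_sdiff A (Finset.range (2 * c + 1))
          rw [Finset.card_range] at this
          omega
        obtain ⟨b, hb⟩ := hB
        rw [Finset.mem_sdiff, Finset.mem_range] at hb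
        refine ⟨Function.update φ v b, ?_, ?_⟩
        · intro x
          by_cases hxv : x = v
          · subst hxv; rw [Function.update_self]; exact hb.1
          · rw [Function.update_of_ne hxv]; exact hφb x
        · intro u w hadj hlt hwn
          by_cases hwv : w = v
          · rw [hwv, Function.update_self]
            have huv : u ≠ v := by
              intro hEq; rw [hEq, hwv] at hlt; exact lt_irrefl _ hlt
            rw [Function.update_of_ne huv]
            intro hEq
            refine hb.2 (Finset.mem_image.mpr ⟨u,
              Finset.mem_filter.mpr ⟨Finset.mem_univ u, ?_, ?_⟩, hEq⟩)
            · rw [hwv] at hadj; exact hadj.symm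
            · rw [hwv] at hlt; exact hlt
          · have hrwn : r w < n := by
              rcases Nat.lt_succ_iff_lt_or_eq.mp hwn with h' | h'
              · exact h'
              · exact absurd (hrinj (h'.trans hvn.symm)) hwv
            have huv : u ≠ v := by
              intro hEq; subst hEq; omega
            rw [Function.update_of_ne huv, Function.update_of_ne hwv]
            exact hφ u w hadj hlt hrwn
      · push_neg at h
        refine ⟨φ, hφb, fun u w hadj hlt hwn => ?_⟩
        have : r w < n := by
          rcases Nat.lt_succ_iff_lt_or_eq.mp hwn with h' | h'
          · exact h'
          · exact absurd h' (h w)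
        exact hφ u w hadj hlt this
  obtain ⟨φ, hφb, hφ⟩ := aux ((Finset.univ.sup r) + 1)
  refine ⟨φ, hφb, fun u v hadj => ?_⟩
  have hne : r u ≠ r v := fun h => G.ne_of_adj hadj (hrinj h)
  rcases lt_or_gt_of_ne hne with h | h
  · exact hφ u v hadj h (Nat.lt_succ_of_le (Finset.le_sup (Finset.mem_univ v)))
  · exact (hφ v u hadj.symm h (Nat.lt_succ_of_le (Finset.le_sup (Finset.mem_univ u)))).symm

section Main
variable {V : Type} [Fintype V]

theorem sparse_feasible_cover'
    (G : SimpleGraph V) (w : Sym2 V → ℚ) (c : ℕ) (hc : 1 ≤ c)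
    (hsparse : ∀ S : Finset V, edgesIn G S ≤ c * S.card) :
    ∃ (m : ℕ), m ≤ 8 * c ^ 2 ∧ ∃ p : Fin m → V → ℕ,
      (∀ i, ∀ u v : V, G.Adj u v → w s(u, v) < 0 → p i u ≠ p i v) ∧
      (∀ u v : V, G.Adj u v → 0 < w s(u, v) → ∃ i, p i u = p i v) := by
  classical
  obtain ⟨r, hrinj, hrb⟩ := exists_order G c hsparse
  obtain ⟨φ, hφb, hφ⟩ := exists_coloring G c r hrinj hrb
  set P : V → Finset V := fun v =>
    Finset.univ.filter (fun u => G.Adj v u ∧ 0 < w s(v, u) ∧ r u < r v) with hPdef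
  have hPmem : ∀ v u, u ∈ P v → G.Adj v u ∧ 0 < w s(v, u) ∧ r u < r v := by
    intro v u hu
    rw [hPdef] at hu
    simpa using (Finset.mem_filter.mp hu).2
  have hPcard : ∀ v, (P v).card ≤ 2 * c := by
    intro v
    refine le_trans (Finset.card_le_card ?_) (hrb v)
    intro u hu
    have := hPmem v u hu
    exact Finset.mem_filter.mpr ⟨Finset.mem_univ u, this.1, this.2.2⟩
  -- parent function
  set par : ℕ → V → Option V := fun j v =>
    if h : ∃ u, ∃ hu : u ∈ P v, (((P v).equivFin ⟨u, hu⟩ : Fin (P v).card) : ℕ) = j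
    then some h.choose else none with hpardef
  have par_spec : ∀ j v x, par j v = some x →
      ∃ hx : x ∈ P v, (((P v).equivFin ⟨x, hx⟩ : Fin (P v).card) : ℕ) = j := by
    intro j v x hx
    rw [hpardef] at hx
    simp only at hx
    split at hx
    · rename_i h
      obtain ⟨hx1, hx2⟩ := h.choose_spec
      cases Option.some.inj hx
      exact ⟨hx1, hx2⟩
    · exact absurd hx (by simp)
  have par_eq : ∀ v u (hu : u ∈ P v),
      par (((P v).equivFin ⟨u, hu⟩ : Fin (P v).card) : ℕ) v = some u := by
    intro v u hu
    set j := (((P v).equivFin ⟨u, hu⟩ : Fin (P v).card) : ℕ) with hj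
    have h : ∃ x, ∃ hx : x ∈ P v, (((P v).equivFin ⟨x, hx⟩ : Fin (P v).card) : ℕ) = j :=
      ⟨u, hu, rfl⟩
    have : par j v = some h.choose := by rw [hpardef]; simp only [dif_pos h]
    rw [this]
    congr 1
    obtain ⟨hx1, hx2⟩ := h.choose_spec
    have : ((P v).equivFin ⟨h.choose, hx1⟩) = ((P v).equivFin ⟨u, hu⟩) :=
      Fin.val_injective (hx2.trans hj)
    have := (P v).equivFin.injective this
    exact congrArg Subtype.val this
  have hpar : ∀ j v u, par j v = some u → r u < r v := by
    intro j v u h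
    obtain ⟨hx, _⟩ := par_spec j v u h
    exact (hPmem v u hx).2.2
  set dep : ℕ → V → ℕ := fun j => depAux r (par j) (hpar j) with hdepdef
  -- the partition maps
  set q : ℕ → ℕ → ℕ → V → ℕ := fun j e t v =>
    if h : ∃ u, par j v = some u ∧ dep j v % 2 = e ∧ φ v = skipc (φ u) t
    then r h.choose else r v with hqdef
  set m : ℕ := (2 * c) * (2 * (2 * c)) with hm
  set E : (Fin (2 * c) × (Fin 2 × Fin (2 * c))) ≃ Fin m :=
    (Equiv.prodCongr (Equiv.refl _) finProdFinEquiv).trans finProdFinEquiv with hE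
  refine ⟨m, by rw [hm]; ring_nf; nlinarith, ?_⟩
  refine ⟨fun i v => q ((E.symm i).1 : ℕ) ((E.symm i).2.1 : ℕ) ((E.symm i).2.2 : ℕ) v, ?_, ?_⟩
  · -- separation
    intro i u v hadj hneg hEq
    set j := ((E.symm i).1 : ℕ)
    set e := ((E.symm i).2.1 : ℕ)
    set t := ((E.symm i).2.2 : ℕ)
    simp only [hqdef] at hEq
    by_cases h1 : ∃ x, par j u = some x ∧ dep j u % 2 = e ∧ φ u = skipc (φ x) t <;>
      by_cases h2 : ∃ x, par j v = some x ∧ dep j v % 2 = e ∧ φ v = skipc (φ x) t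
    · rw [dif_pos h1, dif_pos h2] at hEq
      obtain ⟨hx1, _, hx3⟩ := h1.choose_spec
      obtain ⟨hy1, _, hy3⟩ := h2.choose_spec
      have hxy : h1.choose = h2.choose := hrinj hEq
      rw [hxy] at hx3
      exact hφ u v hadj (hx3.trans hy3.symm)
    · rw [dif_pos h1, dif_neg h2] at hEq
      obtain ⟨hx1, _, _⟩ := h1.choose_spec
      have : h1.choose = v := hrinj hEq
      rw [this] at hx1
      obtain ⟨hPx, _⟩ := par_spec j u v hx1
      have := (hPmem u v hPx).2.1
      linarith
    · rw [dif_neg h1, dif_pos h2] at hEq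
      obtain ⟨hy1, _, _⟩ := h2.choose_spec
      have : u = h2.choose := hrinj hEq
      rw [← this] at hy1
      obtain ⟨hPy, _⟩ := par_spec j v u hy1
      have h5 := (hPmem v u hPy).2.1
      rw [Sym2.eq_swap] at h5
      linarith
    · rw [dif_neg h1, dif_neg h2] at hEq
      exact G.ne_of_adj hadj (hrinj hEq)
  · -- coverage
    intro u v hadj hpos
    have key : ∀ u v : V, G.Adj u v → 0 < w s(u, v) → r u < r v →
        ∃ i : Fin m, q ((E.symm i).1 : ℕ) ((E.symm i).2.1 : ℕ) ((E.symm i).2.2 : ℕ) u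
          = q ((E.symm i).1 : ℕ) ((E.symm i).2.1 : ℕ) ((E.symm i).2.2 : ℕ) v := by
      clear hadj hpos u v
      intro u v hadj hpos hlt
      have hu : u ∈ P v := by
        rw [hPdef]
        refine Finset.mem_filter.mpr ⟨Finset.mem_univ u, hadj.symm, ?_, hlt⟩
        rw [Sym2.eq_swap]; exact hpos
      set j0 := (((P v).equivFin ⟨u, hu⟩ : Fin (P v).card) : ℕ) with hj0def
      have hj0 : j0 < 2 * c := lt_of_lt_of_le ((P v).equivFin ⟨u, hu⟩).isLt (hPcard v)
      have hpv : par j0 v = some u := par_eq v u hu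
      have hdepv : dep j0 v = dep j0 u + 1 := by
        rw [hdepdef]
        exact depAux_some r (par j0) (hpar j0) hpv
      have he0 : dep j0 v % 2 < 2 := Nat.mod_lt _ (by omega)
      obtain ⟨t0, ht0, hskip⟩ := skipc_surj (hφb u) (hφb v) (Ne.symm (hφ u v hadj))
      refine ⟨E (⟨j0, hj0⟩, ⟨dep j0 v % 2, he0⟩, ⟨t0, ht0⟩), ?_⟩
      rw [Equiv.symm_apply_apply]
      simp only [hqdef]
      have hcondv : ∃ x, par j0 v = some x ∧ dep j0 v % 2 = dep j0 v % 2 ∧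
          φ v = skipc (φ x) t0 := ⟨u, hpv, rfl, hskip.symm⟩
      have hcondu : ¬ ∃ x, par j0 u = some x ∧ dep j0 u % 2 = dep j0 v % 2 ∧
          φ u = skipc (φ x) t0 := by
        rintro ⟨x, _, hpar2, _⟩
        omega
      rw [dif_neg hcondu]
      split
      · rename_i h
        obtain ⟨hx1, -, -⟩ := h.choose_spec
        exact congrArg r (Option.some.inj (hpv.symm.trans hx1))
      · rename_i h
        exact absurd ⟨u, hpv, by trivial, hskip.symm⟩ h
    have hne : r u ≠ r v := fun h => G.ne_of_adj hadj (hrinj h)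
    rcases lt_or_gt_of_ne hne with h | h
    · exact key u v hadj hpos h
    · obtain ⟨i, hi⟩ := key v u hadj.symm (by rw [Sym2.eq_swap]; exact hpos) h
      exact ⟨i, hi.symm⟩

end Main

/-- main -/
theorem sparse_feasible_cover {V : Type} [Fintype V]
    (G : SimpleGraph V) (w : Sym2 V → ℚ) (c : ℕ) (hc : 1 ≤ c)
    (hsparse : ∀ S : Finset V, edgesIn G S ≤ c * S.card) :
    ∃ (m : ℕ), m ≤ 8 * c ^ 2 ∧ ∃ p : Fin m → V → ℕ,
      (∀ i, ∀ u v : V, G.Adj u v → w s(u, v) < 0 → p i u ≠ p i v) ∧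
      (∀ u v : V, G.Adj u v → 0 < w s(u, v) → ∃ i, p i u = p i v) := by
  exact sparse_feasible_cover' G w c hc hsparse --
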